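/- (Syndrome-coding construction.) Let n, k, T be integers and H a k×n matrix over 𝔽₂ such that every nonzero vector z ∈ 𝔽₂ⁿ with H·z = 0 has Hamming weight at least 2T+1, and such that the k×k submatrix formed by the last k columns of H is invertible. Then for every integer s with 0 ≤ s ≤ n−k, the pair (s+k, n−s) is achievable for the deterministic combinatorial Slepian–Wolf scheme with parameters (n, T); concretely, the pair of 𝔽₂-linear encodings Code_A(X) = (x_1,…,x_s, H·X) and Code_B(Y) = (y_{s+1},…,y_{n−k}, H·Y) is uniquely decodable for parameters (n, T). -/

import Mathlib

/-- A pair of encodings is uniquely decodable for the combinatorial Slepian–Wolf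
scheme with parameters `(n, T)`. -/
def UniquelyDecodable {n mA mB : ℕ} (T : ℕ)
    (CodeA : (Fin n → Bool) → (Fin mA → Bool))
    (CodeB : (Fin n → Bool) → (Fin mB → Bool)) : Prop :=
  ∀ x y x' y' : Fin n → Bool,
    hammingDist x y ≤ T → hammingDist x' y' ≤ T →
    CodeA x = CodeA x' → CodeB y = CodeB y' → (x, y) = (x', y')

/-- `(mA, mB)` is an achievable pair of rates for the deterministic combinatorial
Slepian–Wolf scheme with parameters `(n, T)`. -/
def Achievable (n T mA mB : ℕ) : Prop :=
  ∃ (CodeA : (Fin n → Bool) → (Fin mA → Bool))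
    (CodeB : (Fin n → Bool) → (Fin mB → Bool)),
    UniquelyDecodable T CodeA CodeB

/-- Identification of `{0,1}` with the field `𝔽₂`. -/
def toF2 {n : ℕ} (x : Fin n → Bool) : Fin n → ZMod 2 := fun i => if x i then 1 else 0

lemma zmod2_eq_of_iff {a b : ZMod 2} (h : (a = 1) ↔ (b = 1)) : a = b := by
  revert h; revert a b; decide

lemma toF2_eq_iff {n : ℕ} (x x' : Fin n → Bool) (i : Fin n) :
    toF2 x i = toF2 x' i ↔ x i = x' i := by
  unfold toF2; cases hx : x i <;> cases hx' : x' i <;> simp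

/-- Syndrome-coding construction: if `H` is a parity-check matrix of a code
correcting `T` errors (all nonzero vectors of the kernel have weight `≥ 2T+1`)
whose last `k` columns form an invertible minor, then
`Code_A(X) = (x_1,…,x_s, H·X)` and `Code_B(Y) = (y_{s+1},…,y_{n−k}, H·Y)` form a
uniquely decodable pair for parameters `(n, T)`; in particular `(s+k, n−s)` is
achievable. -/
theorem stmt7 (n k T s : ℕ) (hkn : k ≤ n) (hs : s ≤ n - k)
    (H : Matrix (Fin k) (Fin n) (ZMod 2))
    (hdist : ∀ z : Fin n → ZMod 2, z ≠ 0 → H.mulVec z = 0 → 2 * T + 1 ≤ hammingNorm z)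
    (hinv : IsUnit (H.submatrix (id : Fin k → Fin k)
      (fun j : Fin k => (⟨n - k + j.val, by have := j.isLt; omega⟩ : Fin n)))) :
    UniquelyDecodable T
      (fun X : Fin n → Bool => fun i : Fin (s + k) =>
        if h : i.val < s then X ⟨i.val, by omega⟩
        else decide (H.mulVec (toF2 X) ⟨i.val - s, by have := i.isLt; omega⟩ = 1))
      (fun Y : Fin n → Bool => fun i : Fin (n - s) =>
        if h : i.val < n - k - s then Y ⟨s + i.val, by omega⟩
        else decide (H.mulVec (toF2 Y) ⟨i.val - (n - k - s), by have := i.isLt; omega⟩ = 1)) ∧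
    Achievable n T (s + k) (n - s) := by
  set g : Fin k → Fin n := fun j : Fin k => (⟨n - k + j.val, by have := j.isLt; omega⟩ : Fin n)
    with hg
  have hUD : UniquelyDecodable T
      (fun X : Fin n → Bool => fun i : Fin (s + k) =>
        if h : i.val < s then X ⟨i.val, by omega⟩
        else decide (H.mulVec (toF2 X) ⟨i.val - s, by have := i.isLt; omega⟩ = 1))
      (fun Y : Fin n → Bool => fun i : Fin (n - s) =>
        if h : i.val < n - k - s then Y ⟨s + i.val, by omega⟩
        else decide (H.mulVec (toF2 Y) ⟨i.val - (n - k - s), by have := i.isLt; omega⟩ = 1)) := by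
    intro x y x' y' hxy hx'y' hA hB
    -- first s coordinates of x agree with x'
    have hxfirst : ∀ i : Fin n, i.val < s → x i = x' i := by
      intro i hi
      have := congrFun hA ⟨i.val, by omega⟩
      simp only [hi, dif_pos] at this
      simpa using this
    -- syndromes of x and x' agree
    have hAsyn : H.mulVec (toF2 x) = H.mulVec (toF2 x') := by
      funext j
      have := congrFun hA ⟨s + j.val, by have := j.isLt; omega⟩
      simp only [show ¬ (s + j.val < s) by omega, dif_neg, not_false_iff] at this
      have h2 : (⟨s + j.val - s, by have := j.isLt; omega⟩ : Fin k) = j := by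
        apply Fin.ext; simp
      rw [h2] at this
      exact zmod2_eq_of_iff (by simpa using this)
    -- middle coordinates of y agree with y'
    have hymid : ∀ i : Fin n, s ≤ i.val → i.val < n - k → y i = y' i := by
      intro i hi1 hi2
      have := congrFun hB ⟨i.val - s, by omega⟩
      simp only [show i.val - s < n - k - s by omega, dif_pos] at this
      have h2 : (⟨s + (i.val - s), by omega⟩ : Fin n) = i := by apply Fin.ext; simp; omega
      rw [h2] at this
      exact this
    -- syndromes of y and y' agree
    have hBsyn : H.mulVec (toF2 y) = H.mulVec (toF2 y') := by
      funext j
      have := congrFun hB ⟨n - k - s + j.val, by have := j.isLt; omega⟩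
      simp only [show ¬ (n - k - s + j.val < n - k - s) by omega, dif_neg, not_false_iff] at this
      have h2 : (⟨n - k - s + j.val - (n - k - s), by have := j.isLt; omega⟩ : Fin k) = j := by
        apply Fin.ext; simp
      rw [h2] at this
      exact zmod2_eq_of_iff (by simpa using this)
    set z : Fin n → ZMod 2 := toF2 x - toF2 x' with hz
    set w : Fin n → ZMod 2 := toF2 y - toF2 y' with hw
    have hHz : H.mulVec z = 0 := by
      rw [hz, Matrix.mulVec_sub, hAsyn, sub_self]
    have hHw : H.mulVec w = 0 := by
      rw [hw, Matrix.mulVec_sub, hBsyn, sub_self]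
    -- z + w has small support and zero syndrome, hence is zero
    have hsum : z + w = 0 := by
      by_contra hne
      have hH : H.mulVec (z + w) = 0 := by rw [Matrix.mulVec_add, hHz, hHw, add_zero]
      have hbound := hdist (z + w) hne hH
      -- support bound
      have hsub : ({i | (z + w) i ≠ 0} : Finset (Fin n)) ⊆
          ({i | x i ≠ y i} : Finset (Fin n)) ∪ ({i | x' i ≠ y' i} : Finset (Fin n)) := by
        intro i hi
        simp only [Finset.mem_filter, Finset.mem_univ, true_and, Finset.mem_union] at hi ⊢
        by_contra hcon
        push_neg at hcon
        obtain ⟨h1, h2⟩ := hcon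
        apply hi
        have e1 : toF2 x i = toF2 y i := by rw [toF2_eq_iff]; exact h1
        have e2 : toF2 x' i = toF2 y' i := by rw [toF2_eq_iff]; exact h2
        show z i + w i = 0
        rw [hz, hw]
        simp only [Pi.sub_apply]
        rw [e1, e2]
        exact (by decide : ∀ a b : ZMod 2, (a - b) + (a - b) = 0) _ _
      have hcard : hammingNorm (z + w) ≤ hammingDist x y + hammingDist x' y' := by
        calc hammingNorm (z + w) = ({i | (z + w) i ≠ 0} : Finset (Fin n)).card := rfl
          _ ≤ (({i | x i ≠ y i} : Finset (Fin n)) ∪ ({i | x' i ≠ y' i} : Finset (Fin n))).card :=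
              Finset.card_le_card hsub
          _ ≤ _ := Finset.card_union_le _ _
      omega
    -- hence z = w (char 2)
    have hzw : z = w := by
      funext i
      have := congrFun hsum i
      simp only [Pi.add_apply, Pi.zero_apply] at this
      have : z i = - w i := by linear_combination this
      rw [this]; exact (CharTwo.neg_eq _)
    -- z vanishes on the first n - k coordinates
    have hzlow : ∀ i : Fin n, i.val < n - k → z i = 0 := by
      intro i hi
      by_cases hcase : i.val < s
      · show toF2 x i - toF2 x' i = 0
        rw [(toF2_eq_iff x x' i).2 (hxfirst i hcase), sub_self]
      · rw [hzw]
        show toF2 y i - toF2 y' i = 0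
        rw [(toF2_eq_iff y y' i).2 (hymid i (by omega) hi), sub_self]
    -- the restriction to the last k coordinates
    set u : Fin k → ZMod 2 := fun j => z (g j) with hu
    have hHu : (H.submatrix (id : Fin k → Fin k) g).mulVec u = 0 := by
      funext i
      rw [← congrFun hHz i]
      show ∑ j : Fin k, H i (g j) * u j = ∑ j : Fin n, H i j * z j
      have hginj : Function.Injective g := by
        intro a b hab
        have : n - k + a.val = n - k + b.val := congrArg Fin.val hab
        exact Fin.ext (by omega)
      rw [← Finset.sum_image (f := fun j => H i j * z j)
        (g := g) (fun a _ b _ h => hginj h)]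
      apply Finset.sum_subset (Finset.subset_univ _)
      intro j _ hj
      have hjlow : j.val < n - k := by
        by_contra hcon
        apply hj
        simp only [Finset.mem_image, Finset.mem_univ, true_and]
        exact ⟨⟨j.val - (n - k), by have := j.isLt; omega⟩, Fin.ext (by show n - k + (j.val - (n - k)) = j.val; omega)⟩
      rw [hzlow j hjlow, mul_zero]
    have hu0 : u = 0 := by
      have hi := (Matrix.mulVec_injective_iff_isUnit).2 hinv
      have : (H.submatrix (id : Fin k → Fin k) g).mulVec u
          = (H.submatrix (id : Fin k → Fin k) g).mulVec 0 := by
        rw [hHu, Matrix.mulVec_zero]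
      exact hi this
    have hz0 : z = 0 := by
      funext i
      by_cases hcase : i.val < n - k
      · exact hzlow i hcase
      · have : i = g ⟨i.val - (n - k), by have := i.isLt; omega⟩ := by
          apply Fin.ext; simp [hg]; omega
        rw [this]
        exact congrFun hu0 _
    have hxx : x = x' := by
      funext i
      have := congrFun hz0 i
      simp only [hz, Pi.sub_apply, Pi.zero_apply, sub_eq_zero] at this
      exact (toF2_eq_iff x x' i).1 this
    have hyy : y = y' := by
      funext i
      have := congrFun (hzw ▸ hz0) i
      simp only [hw, Pi.sub_apply, Pi.zero_apply, sub_eq_zero] at this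
      exact (toF2_eq_iff y y' i).1 this
    rw [hxx, hyy]
  exact ⟨hUD, _, _, hUD⟩
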